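/- The number of sequences of length m over the alphabet {0,1,2,3} that avoid the contiguous subpattern 3,0,3 satisfies the recursion N(m) = 4N(m-1) - N(m-2) + 3N(m-3) for all m ≥ 3. -/

import Mathlib

/-- A sequence `c : Fin m → Fin 4` avoids the consecutive pattern (3,0,3). -/
def TDAvoids {m : ℕ} (c : Fin m → Fin 4) : Prop :=
  ∀ i j k : Fin m, (j : ℕ) = (i : ℕ) + 1 → (k : ℕ) = (i : ℕ) + 2 →
    ¬(c i = 3 ∧ c j = 0 ∧ c k = 3)

instance {m : ℕ} : DecidablePred (TDAvoids (m := m)) := fun _ => by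
  unfold TDAvoids; infer_instance

/-- Number of length-`m` sequences over `{0,1,2,3}` avoiding the pattern (3,0,3). -/
def N (m : ℕ) : ℕ := Fintype.card {c : Fin m → Fin 4 // TDAvoids c}

namespace TDaux

def starts3 : List (Fin 4) → Bool
  | 3 :: _ => true
  | _ => false

def starts03 : List (Fin 4) → Bool
  | 0 :: 3 :: _ => true
  | _ => false

def good : List (Fin 4) → Bool
  | 3 :: 0 :: 3 :: _ => false
  | _ :: t => good t
  | [] => true

lemma starts3_cons (a : Fin 4) (l : List (Fin 4)) : starts3 (a :: l) = decide (a = 3) := by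
  fin_cases a <;> simp [starts3]

lemma starts03_cons (a : Fin 4) (l : List (Fin 4)) :
    starts03 (a :: l) = (decide (a = 0) && starts3 l) := by
  fin_cases a <;> rcases l with _ | ⟨b, t⟩ <;> (try fin_cases b) <;>
    first | decide | simp [starts03, starts3]

lemma good_cons (a : Fin 4) (l : List (Fin 4)) :
    good (a :: l) = (!(decide (a = 3) && starts03 l) && good l) := by
  fin_cases a <;> rcases l with _ | ⟨b, t⟩ <;> (try fin_cases b) <;>
      (try rcases t with _ | ⟨c, t'⟩) <;> (try fin_cases c) <;>
      first | decide | simp [good, starts03]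

lemma starts03_iff (l : List (Fin 4)) :
    starts03 l = true ↔ l[0]? = some 0 ∧ l[1]? = some 3 := by
  rcases l with _ | ⟨a, _ | ⟨b, t⟩⟩
  · simp [starts03]
  · simp [starts03_cons, starts3]
  · simp [starts03_cons, starts3_cons]

lemma good_iff (l : List (Fin 4)) :
    good l = true ↔ ∀ i : ℕ, ¬(l[i]? = some 3 ∧ l[i+1]? = some 0 ∧ l[i+2]? = some 3) := by
  induction l with
  | nil => simp [good]
  | cons a t ih =>
    rw [good_cons]
    constructor
    · rintro h i ⟨h1, h2, h3⟩
      simp only [Bool.and_eq_true, Bool.not_eq_true'] at h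
      cases i with
      | zero =>
        simp only [List.getElem?_cons_zero, Option.some_inj] at h1
        simp only [List.getElem?_cons_succ] at h2 h3
        have : starts03 t = true := (starts03_iff t).2 ⟨h2, h3⟩
        rw [h1, this] at h
        simp at h
      | succ i =>
        simp only [List.getElem?_cons_succ] at h1 h2 h3
        exact (ih.1 h.2) i ⟨h1, h2, h3⟩
    · intro h
      simp only [Bool.and_eq_true, Bool.not_eq_true']
      constructor
      · by_contra hc
        simp only [Bool.not_eq_false, Bool.and_eq_true, decide_eq_true_eq] at hc
        obtain ⟨ha, hs⟩ := hc
        obtain ⟨h2', h3'⟩ := (starts03_iff t).1 hs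
        exact h 0 ⟨by simp [ha], by simpa using h2', by simpa using h3'⟩
      · exact ih.2 fun i hi => h (i + 1) (by simpa using hi)

lemma tdavoids_iff {m : ℕ} (c : Fin m → Fin 4) :
    TDAvoids c ↔ good (List.ofFn c) = true := by
  rw [good_iff]
  constructor
  · rintro h i ⟨h1, h2, h3⟩
    rw [List.getElem?_ofFn] at h1 h2 h3
    by_cases hk : i + 2 < m
    · have hi : i < m := by omega
      have hj : i + 1 < m := by omega
      rw [dif_pos hi] at h1
      rw [dif_pos hj] at h2
      rw [dif_pos hk] at h3
      simp only [Option.some_inj] at h1 h2 h3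
      exact h ⟨i, hi⟩ ⟨i+1, hj⟩ ⟨i+2, hk⟩ rfl rfl ⟨h1, h2, h3⟩
    · rw [dif_neg hk] at h3
      exact absurd h3 (by simp)
  · rintro h i j k hj hk ⟨h1, h2, h3⟩
    refine h (i : ℕ) ⟨?_, ?_, ?_⟩ <;> rw [List.getElem?_ofFn]
    · rw [dif_pos i.isLt]; simpa using h1
    · rw [dif_pos (by omega : (i:ℕ)+1 < m)]
      have : (⟨(i:ℕ)+1, by omega⟩ : Fin m) = j := Fin.ext (by simp [hj])
      rw [this]; simpa using h2
    · rw [dif_pos (by omega : (i:ℕ)+2 < m)]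
      have : (⟨(i:ℕ)+2, by omega⟩ : Fin m) = k := Fin.ext (by simp [hk])
      rw [this]; simpa using h3

open Finset

lemma card_congr' {α : Type*} [Fintype α] (p q : α → Prop) [DecidablePred p] [DecidablePred q]
    (h : ∀ c, p c ↔ q c) : (univ.filter p).card = (univ.filter q).card := by
  congr 1
  ext c
  simp [h c]

def Aset (m : ℕ) : Finset (Fin m → Fin 4) := univ.filter fun c => good (List.ofFn c)

def a (m : ℕ) : ℕ := (Aset m).card
def t (m : ℕ) : ℕ := ((Aset m).filter fun c => starts03 (List.ofFn c)).card
def s (m : ℕ) : ℕ := ((Aset m).filter fun c => starts3 (List.ofFn c)).card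
def x (m : ℕ) : ℕ := ((Aset m).filter fun c => ¬ starts03 (List.ofFn c)).card

lemma N_eq_a (m : ℕ) : N m = a m := by
  rw [N, Fintype.card_subtype, a, Aset]
  exact card_congr' _ _ fun c => by simp [tdavoids_iff]

lemma a_eq (m : ℕ) : a m = t m + x m := by
  rw [a, t, x, Finset.card_filter_add_card_filter_not]

lemma ofFn_cons {m : ℕ} (b : Fin 4) (c : Fin m → Fin 4) :
    List.ofFn (Fin.cons b c : Fin (m+1) → Fin 4) = b :: List.ofFn c := by
  rw [List.ofFn_succ]
  simp

/-- fiberwise decomposition at index 0 -/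
lemma fiber_card (m : ℕ) (q : List (Fin 4) → Bool) :
    (univ.filter fun c : Fin (m+1) → Fin 4 => q (List.ofFn c)).card
      = ∑ b : Fin 4, (univ.filter fun c : Fin m → Fin 4 => q (b :: List.ofFn c)).card := by
  rw [Finset.card_eq_sum_card_fiberwise (f := fun c => c 0) (t := univ) (fun _ _ => mem_univ _)]
  refine Finset.sum_congr rfl fun b _ => ?_
  refine Finset.card_bij' (fun c _ => Fin.tail c) (fun c _ => Fin.cons b c) ?_ ?_ ?_ ?_
  · intro c hc
    simp only [mem_filter, mem_univ, true_and] at hc ⊢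
    obtain ⟨h1, h2⟩ := hc
    have he : List.ofFn c = b :: List.ofFn (Fin.tail c) := by
      conv_lhs => rw [← Fin.cons_self_tail c, h2]
      exact ofFn_cons b (Fin.tail c)
    rw [← he]
    exact h1
  · intro c hc
    simp only [mem_filter, mem_univ, true_and] at hc ⊢
    refine ⟨?_, by simp⟩
    rw [ofFn_cons]
    exact hc
  · intro c hc
    simp only [mem_filter, mem_univ, true_and] at hc
    show Fin.cons b (Fin.tail c) = c
    rw [← hc.2]
    exact Fin.cons_self_tail c
  · intro c _
    simp

lemma rec1 (m : ℕ) : a (m+1) = 3 * a m + x m := by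
  rw [a, Aset, fiber_card m good, Fin.sum_univ_four]
  have h0 : ∀ b : Fin 4, b ≠ 3 →
      (univ.filter fun c : Fin m → Fin 4 => good ((b : Fin 4) :: List.ofFn c)).card = a m := by
    intro b hb
    rw [a, Aset]
    exact card_congr' _ _ fun c => by simp [good_cons, hb]
  rw [h0 0 (by decide), h0 1 (by decide), h0 2 (by decide)]
  have h3 : (univ.filter fun c : Fin m → Fin 4 => good ((3 : Fin 4) :: List.ofFn c)).card = x m := by
    rw [x, Aset, Finset.filter_filter]
    refine card_congr' _ _ fun c => ?_
    simp only [good_cons, Bool.and_eq_true, Bool.not_eq_true', Bool.and_eq_false_iff,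
      decide_eq_true_eq, decide_eq_false_iff_not, Bool.not_eq_true]
    constructor
    · rintro h
      rcases h.1 with h' | h'
      · exact (h' trivial).elim
      · exact ⟨h.2, h'⟩
    · rintro ⟨hg, hs⟩
      exact ⟨Or.inr hs, hg⟩
  rw [h3]
  ring

lemma rec3 (m : ℕ) : s (m+1) = x m := by
  rw [s, Aset, Finset.filter_filter]
  rw [card_congr' _ (fun c : Fin (m+1) → Fin 4 => (good (List.ofFn c) && starts3 (List.ofFn c)) = true)
    (fun c => by simp)]
  rw [fiber_card m (fun l => good l && starts3 l), Fin.sum_univ_four]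
  have h0 : ∀ b : Fin 4, b ≠ 3 →
      (univ.filter fun c : Fin m → Fin 4 =>
        (good ((b : Fin 4) :: List.ofFn c) && starts3 ((b : Fin 4) :: List.ofFn c)) = true).card = 0 := by
    intro b hb
    rw [Finset.card_eq_zero, Finset.filter_eq_empty_iff]
    intro c _
    simp [starts3_cons, hb]
  rw [h0 0 (by decide), h0 1 (by decide), h0 2 (by decide)]
  have h3 : (univ.filter fun c : Fin m → Fin 4 =>
      (good ((3 : Fin 4) :: List.ofFn c) && starts3 ((3 : Fin 4) :: List.ofFn c)) = true).card = x m := by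
    rw [x, Aset, Finset.filter_filter]
    refine card_congr' _ _ fun c => ?_
    simp only [good_cons, starts3_cons, Bool.and_eq_true, Bool.not_eq_true',
      Bool.and_eq_false_iff, decide_eq_true_eq, decide_eq_false_iff_not, Bool.not_eq_true]
    constructor
    · rintro ⟨⟨h1, hg⟩, _⟩
      rcases h1 with h' | h'
      · exact (h' trivial).elim
      · exact ⟨hg, h'⟩
    · rintro ⟨hg, hs⟩
      exact ⟨⟨Or.inr hs, hg⟩, trivial⟩
  rw [h3]
  omega

lemma rec4 (m : ℕ) : t (m+1) = s m := by
  rw [t, Aset, Finset.filter_filter]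
  rw [card_congr' _ (fun c : Fin (m+1) → Fin 4 => (good (List.ofFn c) && starts03 (List.ofFn c)) = true)
    (fun c => by simp)]
  rw [fiber_card m (fun l => good l && starts03 l), Fin.sum_univ_four]
  have h0 : ∀ b : Fin 4, b ≠ 0 →
      (univ.filter fun c : Fin m → Fin 4 =>
        (good ((b : Fin 4) :: List.ofFn c) && starts03 ((b : Fin 4) :: List.ofFn c)) = true).card = 0 := by
    intro b hb
    rw [Finset.card_eq_zero, Finset.filter_eq_empty_iff]
    intro c _
    simp [starts03_cons, hb]
  rw [h0 1 (by decide), h0 2 (by decide), h0 3 (by decide)]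
  have hz : (univ.filter fun c : Fin m → Fin 4 =>
      (good ((0 : Fin 4) :: List.ofFn c) && starts03 ((0 : Fin 4) :: List.ofFn c)) = true).card = s m := by
    rw [s, Aset, Finset.filter_filter]
    refine card_congr' _ _ fun c => ?_
    simp only [good_cons, starts03_cons, Bool.and_eq_true, Bool.not_eq_true',
      decide_eq_true_eq]
    constructor
    · rintro ⟨⟨_, hg⟩, _, hs⟩
      exact ⟨hg, hs⟩
    · rintro ⟨hg, hs⟩
      refine ⟨⟨?_, hg⟩, trivial, hs⟩
      simp
  rw [hz]
  omega

end TDaux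

theorem stmt_0 (m : ℕ) (hm : 3 ≤ m) :
    (N m : ℤ) = 4 * N (m - 1) - N (m - 2) + 3 * N (m - 3) := by
  obtain ⟨k, rfl⟩ : ∃ k, m = k + 3 := ⟨m - 3, by omega⟩
  simp only [Nat.add_sub_cancel, show k + 3 - 1 = k + 2 from rfl, show k + 3 - 2 = k + 1 from rfl]
  rw [TDaux.N_eq_a, TDaux.N_eq_a, TDaux.N_eq_a, TDaux.N_eq_a]
  have e1 : TDaux.a (k+1) = 3 * TDaux.a k + TDaux.x k := TDaux.rec1 k
  have e2 : TDaux.a (k+2) = 3 * TDaux.a (k+1) + TDaux.x (k+1) := TDaux.rec1 (k+1)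
  have e3 : TDaux.a (k+3) = 3 * TDaux.a (k+2) + TDaux.x (k+2) := TDaux.rec1 (k+2)
  have f0 := TDaux.a_eq k
  have f1 := TDaux.a_eq (k+1)
  have f2 := TDaux.a_eq (k+2)
  have g1 : TDaux.s (k+1) = TDaux.x k := TDaux.rec3 k
  have g2 : TDaux.s (k+2) = TDaux.x (k+1) := TDaux.rec3 (k+1)
  have h1 : TDaux.t (k+1) = TDaux.s k := TDaux.rec4 k
  have h2 : TDaux.t (k+2) = TDaux.s (k+1) := TDaux.rec4 (k+1)

  omega
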